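/- Let d ≥ 0 and let f : ℤ → ℚ be a function given by a polynomial of degree at most d. Define D(X) = (1−X)^{d+1} · Σ_{m≥0} f(m) X^m in ℚ[[X]]; then D is a polynomial of degree at most d, and in ℚ[[X]] one has the identity (1−X)^{d+1} · Σ_{m≥1} f(−m) X^m = (−1)^d · X · D*(X), where D*(X) = X^d · D(1/X) is the reversed polynomial with coefficients D*_i = D_{d−i}. -/

import Mathlib

open Finset PowerSeries

private lemma keyD (d : ℕ) (p : Polynomial ℚ) (h : p.natDegree ≤ d) :
    (fwdDiff (1:ℚ))^[d+1] (fun y => p.eval y) = fun _ => 0 := by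
  induction d generalizing p with
  | zero =>
    rw [Polynomial.eq_C_of_natDegree_le_zero h]
    simpa using fwdDiff_const (1:ℚ) (p.coeff 0)
  | succ d ih =>
    set q := p.comp (Polynomial.X + Polynomial.C 1) - p with hq
    have hstep : fwdDiff (1:ℚ) (fun y => p.eval y) = fun y => q.eval y := by
      funext y
      simp [fwdDiff, hq, Polynomial.eval_comp]
    have hnd : (Polynomial.X + Polynomial.C (1:ℚ)).natDegree = 1 :=
      Polynomial.natDegree_X_add_C 1
    have hlcx : (Polynomial.X + Polynomial.C (1:ℚ)).leadingCoeff = 1 :=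
      Polynomial.leadingCoeff_X_add_C 1
    have hdq : q.natDegree ≤ d := by
      rcases Nat.eq_zero_or_pos p.natDegree with h0 | h0
      · have hc : p = Polynomial.C (p.coeff 0) := Polynomial.eq_C_of_natDegree_le_zero h0.le
        have hq0 : q = 0 := by rw [hq]; nth_rewrite 1 [hc]; rw [hc]; simp
        simp [hq0]
      · have hpne : p ≠ 0 := fun hz => by simp [hz] at h0
        have hcompdeg : (p.comp (Polynomial.X + Polynomial.C 1)).degree = p.degree := by
          have hcne : p.comp (Polynomial.X + Polynomial.C 1) ≠ 0 := by
            intro hz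
            have h2 := Polynomial.natDegree_comp (p := p) (q := Polynomial.X + Polynomial.C (1:ℚ))
            rw [hz, hnd] at h2
            simp at h2
            omega
          rw [Polynomial.degree_eq_natDegree hpne, Polynomial.degree_eq_natDegree hcne,
            Polynomial.natDegree_comp, hnd, mul_one]
        have hlc : (p.comp (Polynomial.X + Polynomial.C 1)).leadingCoeff = p.leadingCoeff := by
          rw [Polynomial.leadingCoeff_comp (by rw [hnd]; norm_num), hlcx]
          simp
        have hlt : q.degree < p.degree := by
          have := Polynomial.degree_sub_lt hcompdeg
            (by intro hz; rw [hz] at hcompdeg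
                exact hpne (Polynomial.degree_eq_bot.mp hcompdeg.symm)) hlc
          rwa [hcompdeg] at this
        have hlt2 : q.degree < ((d+1 : ℕ) : WithBot ℕ) :=
          lt_of_lt_of_le hlt (Polynomial.degree_le_of_natDegree_le h)
        rcases eq_or_ne q 0 with hq0 | hq0
        · simp [hq0]
        · rw [Polynomial.degree_eq_natDegree hq0] at hlt2
          exact Nat.lt_succ_iff.mp (by exact_mod_cast hlt2)
    calc (fwdDiff (1:ℚ))^[d+1+1] (fun y => p.eval y)
        = (fwdDiff (1:ℚ))^[d+1] (fwdDiff (1:ℚ) (fun y => p.eval y)) := by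
          rw [Function.iterate_succ_apply]
      _ = fun _ => 0 := by rw [hstep]; exact ih q hdq

private lemma keysum' (d : ℕ) (p : Polynomial ℚ) (h : p.natDegree ≤ d) (x : ℚ) :
    ∑ j ∈ range (d+2), (-1:ℚ)^j * ((d+1).choose j) * p.eval (x + j) = 0 := by
  have h0 := congrFun (keyD d p h) x
  rw [fwdDiff_iter_eq_sum_shift] at h0
  have h1 : ∑ k ∈ range (d+1+1), ((-1:ℚ)^(d+1-k) * ((d+1).choose k)) * p.eval (x + k) = 0 := by
    rw [← h0]
    refine sum_congr rfl fun k hk => ?_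
    rw [zsmul_eq_mul]
    push_cast
    ring_nf
  have h2 : ∑ j ∈ range (d+2), (-1:ℚ)^j * ((d+1).choose j) * p.eval (x + j)
      = (-1:ℚ)^(d+1) * ∑ k ∈ range (d+1+1), ((-1:ℚ)^(d+1-k) * ((d+1).choose k)) * p.eval (x + k) := by
    rw [mul_sum]
    refine sum_congr rfl fun j hj => ?_
    have hj' : j ≤ d+1 := Nat.lt_succ_iff.mp (mem_range.mp hj)
    have hsgn : (-1:ℚ)^(d+1) * (-1:ℚ)^(d+1-j) = (-1:ℚ)^j := by
      rw [← pow_add]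
      have he : (d+1) + (d+1-j) = j + 2*(d+1-j) := by omega
      rw [he, pow_add, pow_mul]
      norm_num
    rw [← hsgn]; ring
  rw [h2, h1, mul_zero]

private lemma keysum (d : ℕ) (p : Polynomial ℚ) (h : p.natDegree ≤ d) (x : ℚ) :
    ∑ j ∈ range (d+2), (-1:ℚ)^j * ((d+1).choose j) * p.eval (x - j) = 0 := by
  have h0 := keysum' d p h (x - (d+1))
  rw [← sum_range_reflect] at h0
  have h2 : ∑ j ∈ range (d+2), (-1:ℚ)^j * ((d+1).choose j) * p.eval (x - j)
      = (-1:ℚ)^(d+1) * ∑ j ∈ range (d+2),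
        (-1:ℚ)^(d+2-1-j) * ((d+1).choose (d+2-1-j)) * p.eval (x - (d+1) + ((d+2-1-j : ℕ) : ℚ)) := by
    rw [mul_sum]
    refine sum_congr rfl fun j hj => ?_
    have hj' : j ≤ d+1 := Nat.lt_succ_iff.mp (mem_range.mp hj)
    have he1 : d+2-1-j = d+1-j := by omega
    have hch : (d+1).choose (d+1-j) = (d+1).choose j := Nat.choose_symm hj'
    have hcast : ((d+1-j : ℕ) : ℚ) = (d+1 : ℚ) - j := by
      push_cast [Nat.cast_sub hj']
      ring
    have harg : x - (d+1) + ((d+1-j : ℕ) : ℚ) = x - j := by rw [hcast]; ring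
    have hsgn : (-1:ℚ)^(d+1) * (-1:ℚ)^(d+1-j) = (-1:ℚ)^j := by
      rw [← pow_add]
      have he : (d+1) + (d+1-j) = j + 2*(d+1-j) := by omega
      rw [he, pow_add, pow_mul]
      norm_num
    rw [he1, hch, harg, ← hsgn]; ring
  rw [h2, h0, mul_zero]

private lemma c_eq (e j : ℕ) :
    PowerSeries.coeff j ((1 - PowerSeries.X)^e) =
      if j ≤ e then (-1:ℚ)^j * (e.choose j) else 0 := by
  rw [sub_pow, map_sum]
  have hterm : ∀ m ∈ range (e+1),
      PowerSeries.coeff j ((-1:ℚ⟦X⟧)^(m+e) * (1:ℚ⟦X⟧)^m * PowerSeries.X^(e-m) * (e.choose m : ℚ⟦X⟧))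
      = if j = e - m ∧ m ≤ e then (-1:ℚ)^(m+e) * (e.choose m) else 0 := by
    intro m hm
    have hm' : m ≤ e := Nat.lt_succ_iff.mp (mem_range.mp hm)
    have : ((-1:ℚ⟦X⟧)^(m+e) * (1:ℚ⟦X⟧)^m * PowerSeries.X^(e-m) * (e.choose m : ℚ⟦X⟧))
        = PowerSeries.C ((-1:ℚ)^(m+e) * (e.choose m)) * PowerSeries.X^(e-m) := by
      have hneg : (-1:ℚ⟦X⟧) = PowerSeries.C (-1) := by simp
      have hcast : ((e.choose m : ℕ) : ℚ⟦X⟧) = PowerSeries.C ((e.choose m : ℕ) : ℚ) := by simp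
      rw [hneg, hcast, ← map_pow, one_pow, mul_one, map_mul]
      ring
    rw [this, PowerSeries.coeff_C_mul, PowerSeries.coeff_X_pow]
    by_cases hj : j = e - m <;> simp [hj, hm']
  rw [sum_congr rfl hterm]
  by_cases hje : j ≤ e
  · rw [sum_eq_single (e - j)]
    · have h1 : e - (e - j) = j := by omega
      have h2 : e - j ≤ e := by omega
      have hch : e.choose (e - j) = e.choose j := Nat.choose_symm hje
      have hsgn : (-1:ℚ)^(e - j + e) = (-1:ℚ)^j := by
        have he : (e - j) + e = j + 2*(e - j) := by omega
        rw [he, pow_add, pow_mul]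
        norm_num
      rw [if_pos ⟨by omega, h2⟩, if_pos hje, hch, hsgn]
    · intro m hm hne
      have hm' : m ≤ e := Nat.lt_succ_iff.mp (mem_range.mp hm)
      have : ¬ (j = e - m ∧ m ≤ e) := by
        rintro ⟨h1, -⟩
        exact hne (by omega)
      simp [this]
    · intro hmem
      exact absurd (mem_range.mpr (by omega)) hmem
  · rw [if_neg hje]
    refine sum_eq_zero fun m hm => ?_
    have hm' : m ≤ e := Nat.lt_succ_iff.mp (mem_range.mp hm)
    have : ¬ (j = e - m ∧ m ≤ e) := by
      rintro ⟨h1, -⟩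
      omega
    simp [this]

private lemma coeff_prod (e n : ℕ) (F : ℚ⟦X⟧) :
    PowerSeries.coeff n ((1 - PowerSeries.X)^e * F) =
      ∑ j ∈ range (n+1), (if j ≤ e then (-1:ℚ)^j * (e.choose j) else 0)
        * PowerSeries.coeff (n-j) F := by
  rw [PowerSeries.coeff_mul, Nat.sum_antidiagonal_eq_sum_range_succ_mk]
  exact sum_congr rfl fun j _ => by rw [c_eq]

private lemma main_id (d m : ℕ) (hm : m ≤ d) (p : Polynomial ℚ) (hdeg : p.natDegree ≤ d) :
    ∑ j ∈ range (m+1), (-1:ℚ)^j * ((d+1).choose j) * p.eval (-(m+1:ℚ) + j)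
      = (-1:ℚ)^d * ∑ j ∈ range (d-m+1), (-1:ℚ)^j * ((d+1).choose j) * p.eval ((d:ℚ) - m - j) := by
  have hkey := keysum d p hdeg ((d:ℚ) - m)
  have hsplit : range (d+2) = range ((d-m+1) + (m+1)) := by congr 1; omega
  rw [hsplit, sum_range_add] at hkey
  have htail : ∑ i ∈ range (m+1),
      (-1:ℚ)^(d-m+1+i) * ((d+1).choose (d-m+1+i)) * p.eval ((d:ℚ) - m - ((d-m+1+i : ℕ) : ℚ))
      = (-1:ℚ)^(d+1) * ∑ j ∈ range (m+1), (-1:ℚ)^j * ((d+1).choose j) * p.eval (-(m+1:ℚ) + j) := by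
    rw [mul_sum, ← sum_range_reflect]
    refine sum_congr rfl fun i hi => ?_
    have hi' : i ≤ m := Nat.lt_succ_iff.mp (mem_range.mp hi)
    have hk : d-m+1+(m+1-1-i) = d+1-i := by omega
    rw [hk]
    have hch : (d+1).choose (d+1-i) = (d+1).choose i := Nat.choose_symm (by omega)
    have hsgn : (-1:ℚ)^(d+1-i) = (-1:ℚ)^(d+1) * (-1:ℚ)^i := by
      have h2 : (-1:ℚ)^(2*i) = 1 := by rw [pow_mul]; norm_num
      calc (-1:ℚ)^(d+1-i) = (-1:ℚ)^(d+1-i) * (-1:ℚ)^(2*i) := by rw [h2, mul_one]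
        _ = (-1:ℚ)^(d+1+i) := by rw [← pow_add]; congr 1; omega
        _ = (-1:ℚ)^(d+1) * (-1:ℚ)^i := pow_add _ _ _
    have harg : (d:ℚ) - m - ((d+1-i : ℕ) : ℚ) = -(m+1:ℚ) + i := by
      push_cast [Nat.cast_sub (by omega : i ≤ d+1)]
      ring
    rw [hch, hsgn, harg]
    ring
  rw [htail] at hkey
  have hsq : (-1:ℚ)^(d+1) * (-1:ℚ)^(d+1) = 1 := by
    rw [← pow_add, ← two_mul, pow_mul]; norm_num
  linear_combination (-(-1:ℚ)^d) * hkey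
    - (∑ j ∈ range (m+1), (-1:ℚ)^j * ((d+1).choose j) * p.eval (-(m+1:ℚ) + j)) * hsq

/-- For a polynomial function `f : ℤ → ℚ` of degree at most `d`, the series
`D = (1-X)^(d+1) * Σ_{m≥0} f(m) X^m` is a polynomial of degree at most `d`, and
`(1-X)^(d+1) * Σ_{m≥1} f(-m) X^m = (-1)^d * X * D*`, where `D*` is the reversal of `D`,
with coefficients `D*_i = D_{d-i}` for `i ≤ d` (and `0` for `i > d`). -/
theorem stmt_4 (d : ℕ) (f : ℤ → ℚ) (p : Polynomial ℚ)
    (hdeg : p.natDegree ≤ d) (hf : ∀ m : ℤ, f m = p.eval (m : ℚ)) :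
    (∀ i : ℕ, d < i →
      PowerSeries.coeff i
        ((1 - PowerSeries.X) ^ (d + 1) * PowerSeries.mk fun m : ℕ => f (m : ℤ)) = 0) ∧
    (1 - PowerSeries.X) ^ (d + 1) *
        PowerSeries.mk (fun m : ℕ => if m = 0 then 0 else f (-(m : ℤ))) =
      PowerSeries.C ((-1 : ℚ) ^ d) * PowerSeries.X *
        PowerSeries.mk (fun i : ℕ =>
          if i ≤ d then
            PowerSeries.coeff (d - i)
              ((1 - PowerSeries.X) ^ (d + 1) * PowerSeries.mk fun m : ℕ => f (m : ℤ))
          else 0) := by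
  constructor
  · intro i hi
    rw [coeff_prod]
    have hsub : range (d+2) ⊆ range (i+1) := range_subset_range.mpr (by omega)
    have hvanish : ∀ j ∈ range (i+1), j ∉ range (d+2) →
        (if j ≤ d+1 then (-1:ℚ)^j * ((d+1).choose j) else 0)
          * PowerSeries.coeff (i-j) (PowerSeries.mk fun m : ℕ => f (m : ℤ)) = 0 := by
      intro j _ hj2
      rw [if_neg (by simp at hj2; omega), zero_mul]
    rw [← sum_subset hsub hvanish, ← keysum d p hdeg (i:ℚ)]
    refine sum_congr rfl fun j hj => ?_
    have hj' : j ≤ d+1 := Nat.lt_succ_iff.mp (mem_range.mp hj)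
    rw [if_pos hj', PowerSeries.coeff_mk, hf]
    congr 1
    push_cast [Nat.cast_sub (by omega : j ≤ i)]
    ring
  · ext n
    rw [coeff_prod, mul_assoc, PowerSeries.coeff_C_mul]
    cases n with
    | zero =>
      rw [PowerSeries.coeff_zero_X_mul, mul_zero, sum_range_one, PowerSeries.coeff_mk]
      simp
    | succ m =>
      rw [PowerSeries.coeff_succ_X_mul, PowerSeries.coeff_mk]
      by_cases hm : m ≤ d
      · rw [if_pos hm, coeff_prod]
        have hL : ∑ j ∈ range (m+1+1),
            (if j ≤ d+1 then (-1:ℚ)^j * ((d+1).choose j) else 0)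
              * PowerSeries.coeff (m+1-j)
                  (PowerSeries.mk (fun k : ℕ => if k = 0 then 0 else f (-(k : ℤ))))
            = ∑ j ∈ range (m+1), (-1:ℚ)^j * ((d+1).choose j) * p.eval (-(m+1:ℚ) + j) := by
          rw [sum_range_succ]
          have hlast : PowerSeries.coeff (m+1-(m+1))
              (PowerSeries.mk (fun k : ℕ => if k = 0 then 0 else f (-(k : ℤ)))) = 0 := by
            rw [PowerSeries.coeff_mk]
            simp
          rw [hlast, mul_zero, add_zero]
          refine sum_congr rfl fun j hj => ?_
          have hj' : j ≤ m := Nat.lt_succ_iff.mp (mem_range.mp hj)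
          rw [if_pos (by omega), PowerSeries.coeff_mk, if_neg (by omega), hf]
          congr 1
          push_cast [Nat.cast_sub (by omega : j ≤ m+1)]
          ring
        have hR : ∑ j ∈ range (d-m+1),
            (if j ≤ d+1 then (-1:ℚ)^j * ((d+1).choose j) else 0)
              * PowerSeries.coeff (d-m-j) (PowerSeries.mk fun k : ℕ => f (k : ℤ))
            = ∑ j ∈ range (d-m+1), (-1:ℚ)^j * ((d+1).choose j) * p.eval ((d:ℚ) - m - j) := by
          refine sum_congr rfl fun j hj => ?_
          have hj' : j ≤ d-m := Nat.lt_succ_iff.mp (mem_range.mp hj)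
          rw [if_pos (by omega), PowerSeries.coeff_mk, hf]
          congr 1
          push_cast [Nat.cast_sub (by omega : j ≤ d-m), Nat.cast_sub hm]
          ring
        rw [hL, hR]
        exact main_id d m hm p hdeg
      · rw [if_neg hm, mul_zero]
        have hsub : range (d+2) ⊆ range (m+1+1) := range_subset_range.mpr (by omega)
        have hvanish : ∀ j ∈ range (m+1+1), j ∉ range (d+2) →
            (if j ≤ d+1 then (-1:ℚ)^j * ((d+1).choose j) else 0)
              * PowerSeries.coeff (m+1-j)
                  (PowerSeries.mk (fun k : ℕ => if k = 0 then 0 else f (-(k : ℤ)))) = 0 := by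
          intro j _ hj2
          rw [if_neg (by simp at hj2; omega), zero_mul]
        rw [← sum_subset hsub hvanish, ← keysum' d p hdeg (-(m+1:ℚ))]
        refine sum_congr rfl fun j hj => ?_
        have hj' : j ≤ d+1 := Nat.lt_succ_iff.mp (mem_range.mp hj)
        rw [if_pos hj', PowerSeries.coeff_mk, if_neg (by omega), hf]
        congr 1
        push_cast [Nat.cast_sub (by omega : j ≤ m+1)]
        ring
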